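/- Let 0 ≤ β < 1/2, let (F_n)_{n≥0} be a filtration on a probability space, and let (D_n)_{n≥0} be an (F_n)-adapted process with values in the nonnegative integers such that D_0 = k almost surely for a fixed integer k ≥ 0, and such that for every n, on the event {T > n} (where T = inf{m ≥ 0 : D_m = 0}) one has D_{n+1} ∈ {D_n - 1, D_n + 1} almost surely and P(D_{n+1} = D_n - 1 | F_n) ≥ 1 - β almost surely. Then the hitting time T of 0 is almost surely finite and satisfies E[T] ≤ k/(1-2β). -/

import Mathlib

open MeasureTheory ProbabilityTheory ENNReal

lemma enat_coe_eq_tsum (a : ℕ∞) :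
    (a : ℝ≥0∞) = ∑' n : ℕ, if (n : ℕ∞) < a then (1 : ℝ≥0∞) else 0 := by
  induction a using ENat.recTopCoe with
  | top =>
    simp only [ENat.coe_lt_top, if_true]
    rw [ENNReal.tsum_const_eq_top_of_ne_zero one_ne_zero]
    simp
  | coe m =>
    have h1 : ∀ n : ℕ, ((n : ℕ∞) < (m : ℕ∞)) ↔ n < m := fun n => Nat.cast_lt
    have h2 : (∑' n : ℕ, if (n : ℕ∞) < (m : ℕ∞) then (1 : ℝ≥0∞) else 0)
        = ∑ n ∈ Finset.range m, (1 : ℝ≥0∞) := by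
      rw [tsum_eq_sum (s := Finset.range m)]
      · exact Finset.sum_congr rfl fun n hn => by
          simp [h1, Finset.mem_range.mp hn]
      · intro n hn
        simp only [Finset.mem_range, not_lt] at hn
        simp [h1, Nat.not_lt.mpr hn]
    rw [h2]
    simp

/-- An adapted nonnegative-integer-valued process started at `k` that, while
positive, moves by `±1` and steps down with conditional probability at least `1 - β`
(for `β < 1/2`), hits `0` in almost surely finite time `T` with `E[T] ≤ k / (1 - 2β)`. -/
theorem supermartingale_walk_hitting_time_bound
    {Ω : Type*} {m0 : MeasurableSpace Ω} (μ : Measure Ω) [IsProbabilityMeasure μ]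
    (β : ℝ) (hβ0 : 0 ≤ β) (hβ : β < 1 / 2)
    (F : Filtration ℕ m0)
    (D : ℕ → Ω → ℕ) (hadapted : Adapted F D)
    (k : ℕ) (hD0 : ∀ᵐ ω ∂μ, D 0 ω = k)
    (T : Ω → ℕ∞)
    (hT : ∀ ω, T ω = ⨅ (m : ℕ) (_ : D m ω = 0), (m : ℕ∞))
    (hstep : ∀ n : ℕ, ∀ᵐ ω ∂μ, (n : ℕ∞) < T ω →
      (D (n + 1) ω = D n ω - 1 ∨ D (n + 1) ω = D n ω + 1))
    (hcond : ∀ n : ℕ, ∀ᵐ ω ∂μ, (n : ℕ∞) < T ω →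
      1 - β ≤ (μ[Set.indicator {ω' | D (n + 1) ω' = D n ω' - 1}
        (fun _ => (1 : ℝ)) | F n]) ω) :
    (∀ᵐ ω ∂μ, T ω < ⊤) ∧
      ∫⁻ ω, (T ω : ℝ≥0∞) ∂μ ≤ ENNReal.ofReal (k / (1 - 2 * β)) := by
  have hc : (0:ℝ) < 1 - 2 * β := by linarith
  have hDmeas : ∀ n, Measurable (D n) := fun n =>
    Measurable.mono (hadapted n) (F.le n) le_rfl
  -- characterization of T
  have hTle : ∀ (n : ℕ) (ω : Ω), T ω ≤ (n : ℕ∞) ↔ ∃ m ≤ n, D m ω = 0 := by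
    intro n ω
    rw [hT ω]
    constructor
    · intro h
      by_contra hne
      push_neg at hne
      have h2 : ((n + 1 : ℕ) : ℕ∞) ≤ ⨅ (m : ℕ) (_ : D m ω = 0), (m : ℕ∞) := by
        refine le_iInf₂ fun m hm => ?_
        have hlt : n < m := by
          by_contra hle
          exact hne m (by omega) hm
        exact_mod_cast hlt
      have h3 : ((n + 1 : ℕ) : ℕ∞) ≤ (n : ℕ∞) := h2.trans h
      have : n + 1 ≤ n := by exact_mod_cast h3
      omega
    · rintro ⟨m, hm, hDm⟩
      have h1 : (⨅ (m : ℕ) (_ : D m ω = 0), (m : ℕ∞)) ≤ (m : ℕ∞) :=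
        iInf_le_of_le m (iInf_le_of_le hDm le_rfl)
      exact h1.trans (by exact_mod_cast hm)
  have hgt : ∀ (n : ℕ) (ω : Ω), (n : ℕ∞) < T ω ↔ ∀ m ≤ n, D m ω ≠ 0 := by
    intro n ω
    rw [← not_le, hTle]
    push_neg
    rfl
  set B : ℕ → Set Ω := fun n => {ω | (n : ℕ∞) < T ω} with hBdef
  set A : ℕ → Set Ω := fun n => {ω' | D (n + 1) ω' = D n ω' - 1} with hAdef
  have hBeq : ∀ n, B n = ⋂ m ∈ Finset.range (n + 1), {ω | D m ω ≠ 0} := by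
    intro n
    ext ω
    simp [hBdef, hgt n ω, Nat.lt_succ_iff]
  have hBmeasF : ∀ n, MeasurableSet[F n] (B n) := by
    intro n
    rw [hBeq]
    refine Finset.measurableSet_biInter _ fun m hm => ?_
    have hmn : m ≤ n := Nat.lt_succ_iff.mp (Finset.mem_range.mp hm)
    have hm' : Measurable[F n] (D m) :=
      Measurable.mono (hadapted m) (F.mono hmn) le_rfl
    exact (hm' (measurableSet_singleton 0)).compl
  have hBmeas : ∀ n, MeasurableSet (B n) := fun n => F.le n _ (hBmeasF n)
  have hAmeas : ∀ n, MeasurableSet (A n) :=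
    fun n => measurableSet_eq_fun (hDmeas (n + 1))
      ((Measurable.of_discrete (f := fun m : ℕ => m - 1)).comp (hDmeas n))
  have hBanti : ∀ n, B (n + 1) ⊆ B n := by
    intro n ω h
    have h' : ((n + 1 : ℕ) : ℕ∞) < T ω := h
    exact lt_of_le_of_lt (by exact_mod_cast Nat.le_succ n) h'
  set X : ℕ → Ω → ℝ := fun n => (B n).indicator (fun ω => (D n ω : ℝ)) with hXdef
  have hXmeas : ∀ n, Measurable (X n) := fun n =>
    (((Measurable.of_discrete (f := fun m : ℕ => (m : ℝ))).comp (hDmeas n))).indicator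
      (hBmeas n)
  have hXnonneg : ∀ n ω, 0 ≤ X n ω := by
    intro n ω
    simp only [hXdef]
    exact Set.indicator_nonneg (fun ω _ => by positivity) ω
  -- key pointwise inequality
  have hkey : ∀ n, ∀ᵐ ω ∂μ, X (n + 1) ω ≤ X n ω
      + (B n).indicator (fun _ => (1:ℝ)) ω
      - 2 * ((A n ∩ B n).indicator (fun _ => (1:ℝ)) ω) := by
    intro n
    filter_upwards [hstep n] with ω hω
    by_cases hBn : ω ∈ B n
    · have hDn0 : D n ω ≠ 0 := (hgt n ω).mp hBn n le_rfl
      have hX1 : X (n + 1) ω = (D (n + 1) ω : ℝ) := by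
        by_cases h1 : ω ∈ B (n + 1)
        · simp [hXdef, Set.indicator_of_mem h1]
        · have hle : T ω ≤ ((n + 1 : ℕ) : ℕ∞) := not_lt.mp h1
          obtain ⟨m, hm, hDm⟩ := (hTle (n + 1) ω).mp hle
          have hmn : m = n + 1 := by
            rcases Nat.lt_succ_iff_lt_or_eq.mp (Nat.lt_succ_of_le hm) with h | h
            · exact absurd hDm ((hgt n ω).mp hBn m (Nat.lt_succ_iff.mp h))
            · exact h
          subst hmn
          simp [hXdef, Set.indicator_of_notMem h1, hDm]
      have hstepω := hω hBn
      have hXn : X n ω = (D n ω : ℝ) := by simp [hXdef, Set.indicator_of_mem hBn]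
      by_cases hA : ω ∈ A n
      · have hA' : D (n + 1) ω = D n ω - 1 := hA
        have h1 : 1 ≤ D n ω := Nat.one_le_iff_ne_zero.mpr hDn0
        have hcast : (D (n + 1) ω : ℝ) = (D n ω : ℝ) - 1 := by
          rw [hA']
          push_cast [h1]
          ring
        rw [hX1, hcast, hXn,
          Set.indicator_of_mem hBn, Set.indicator_of_mem (Set.mem_inter hA hBn)]
        linarith
      · have hup : D (n + 1) ω = D n ω + 1 := by
          rcases hstepω with h | h
          · exact absurd h hA
          · exact h
        have hnotin : ω ∉ A n ∩ B n := fun h => hA h.1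
        rw [hX1, hup, hXn, Set.indicator_of_mem hBn, Set.indicator_of_notMem hnotin]
        push_cast
        ring_nf
        linarith
    · have h1 : ω ∉ B (n + 1) := fun h => hBn (hBanti n h)
      have hnotin : ω ∉ A n ∩ B n := fun h => hBn h.2
      rw [Set.indicator_of_notMem hBn, Set.indicator_of_notMem hnotin]
      simp [hXdef, Set.indicator_of_notMem h1, Set.indicator_of_notMem hBn]
  -- a.e. bound on X n
  have hXbd : ∀ n, ∀ᵐ ω ∂μ, X n ω ≤ (k : ℝ) + n := by
    intro n
    induction n with
    | zero =>
      filter_upwards [hD0] with ω h0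
      simp only [hXdef, Nat.cast_zero, add_zero]
      by_cases hmem : ω ∈ B 0
      · rw [Set.indicator_of_mem hmem, h0]
      · rw [Set.indicator_of_notMem hmem]; positivity
    | succ n ih =>
      filter_upwards [ih, hkey n] with ω h1 h2
      have h3 : (B n).indicator (fun _ => (1:ℝ)) ω ≤ 1 :=
        Set.indicator_le_self' (fun _ _ => by norm_num) ω |>.trans (by by_cases h : ω ∈ B n <;> simp [h])
      have h4 : 0 ≤ (A n ∩ B n).indicator (fun _ => (1:ℝ)) ω :=
        Set.indicator_nonneg (fun _ _ => by norm_num) ω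
      push_cast
      linarith
  have hXint : ∀ n, Integrable (X n) μ := by
    intro n
    refine (integrable_const ((k : ℝ) + n)).mono' (hXmeas n).aestronglyMeasurable ?_
    filter_upwards [hXbd n] with ω h
    rw [Real.norm_eq_abs, abs_of_nonneg (hXnonneg n ω)]
    exact h
  have hIind : ∀ s : Set Ω, MeasurableSet s →
      Integrable (s.indicator fun _ => (1:ℝ)) μ := fun s hs =>
    (integrable_const (1:ℝ)).indicator hs
  -- conditional expectation inequality
  have hcondInt : ∀ n, (1 - β) * (μ (B n)).toReal ≤ (μ (A n ∩ B n)).toReal := by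
    intro n
    have hAint : Integrable ((A n).indicator fun _ => (1:ℝ)) μ := hIind _ (hAmeas n)
    have h1 : ∫ ω in B n, (μ[(A n).indicator (fun _ => (1:ℝ)) | F n]) ω ∂μ
        = ∫ ω in B n, (A n).indicator (fun _ => (1:ℝ)) ω ∂μ :=
      setIntegral_condExp (F.le n) hAint (hBmeasF n)
    have h2 : ∫ ω in B n, (A n).indicator (fun _ => (1:ℝ)) ω ∂μ
        = (μ (A n ∩ B n)).toReal := by
      rw [setIntegral_indicator (hAmeas n), setIntegral_const, Set.inter_comm]
      simp [Measure.real]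
    have h3 : (1 - β) * (μ (B n)).toReal
        ≤ ∫ ω in B n, (μ[(A n).indicator (fun _ => (1:ℝ)) | F n]) ω ∂μ := by
      have hr : ∀ᵐ ω ∂(μ.restrict (B n)),
          (fun _ => (1 - β)) ω ≤ (μ[(A n).indicator (fun _ => (1:ℝ)) | F n]) ω := by
        rw [ae_restrict_iff' (hBmeas n)]
        filter_upwards [hcond n] with ω h hmem
        exact h hmem
      calc (1 - β) * (μ (B n)).toReal = ∫ _ω in B n, (1 - β) ∂μ := by
            rw [setIntegral_const]; rw [smul_eq_mul]; simp only [Measure.real]; ring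
        _ ≤ _ := setIntegral_mono_ae_restrict (integrable_const _).integrableOn
            integrable_condExp.integrableOn hr
    linarith [h1 ▸ h3, h2 ▸ (h1 ▸ h3)]
  -- integral recursion
  have hIstep : ∀ n, ∫ ω, X (n + 1) ω ∂μ
      ≤ ∫ ω, X n ω ∂μ - (1 - 2 * β) * (μ (B n)).toReal := by
    intro n
    have hintB := hIind _ (hBmeas n)
    have hintAB := hIind _ ((hAmeas n).inter (hBmeas n))
    have hint : Integrable (fun ω => X n ω + (B n).indicator (fun _ => (1:ℝ)) ω
        - 2 * ((A n ∩ B n).indicator (fun _ => (1:ℝ)) ω)) μ :=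
      ((hXint n).add hintB).sub (hintAB.const_mul 2)
    have h0 : ∫ ω, X (n + 1) ω ∂μ ≤ ∫ ω, (X n ω
        + (B n).indicator (fun _ => (1:ℝ)) ω
        - 2 * ((A n ∩ B n).indicator (fun _ => (1:ℝ)) ω)) ∂μ :=
      integral_mono_ae (hXint (n + 1)) hint (hkey n)
    have hint1 : Integrable (fun ω => X n ω + (B n).indicator (fun _ => (1:ℝ)) ω) μ :=
      (hXint n).add hintB
    have hint2 : Integrable (fun ω => 2 * ((A n ∩ B n).indicator (fun _ => (1:ℝ)) ω)) μ :=
      hintAB.const_mul 2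
    rw [integral_sub hint1 hint2, integral_add (hXint n) hintB, integral_const_mul] at h0
    have hBint : ∫ ω, (B n).indicator (fun _ => (1:ℝ)) ω ∂μ = (μ (B n)).toReal := by
      rw [integral_indicator_const (1:ℝ) (hBmeas n)]; simp [Measure.real]
    have hABint : ∫ ω, (A n ∩ B n).indicator (fun _ => (1:ℝ)) ω ∂μ
        = (μ (A n ∩ B n)).toReal := by
      rw [integral_indicator_const (1:ℝ) ((hAmeas n).inter (hBmeas n))]; simp [Measure.real]
    rw [hBint, hABint] at h0
    have := hcondInt n
    linarith
  -- partial sums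
  have hsum0 : ∀ N, ∫ ω, X N ω ∂μ
      + (1 - 2 * β) * ∑ n ∈ Finset.range N, (μ (B n)).toReal ≤ k := by
    intro N
    induction N with
    | zero =>
      simp only [Finset.range_zero, Finset.sum_empty, mul_zero, add_zero]
      have : ∫ ω, X 0 ω ∂μ ≤ ∫ _ω, (k : ℝ) ∂μ := by
        refine integral_mono_ae (hXint 0) (integrable_const _) ?_
        filter_upwards [hXbd 0] with ω h
        simpa using h
      simpa using this
    | succ N ih =>
      rw [Finset.sum_range_succ]
      have := hIstep N
      linarith
  have hsum' : ∀ N, ∑ n ∈ Finset.range N, (μ (B n)).toReal ≤ (k : ℝ) / (1 - 2 * β) := by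
    intro N
    rw [le_div_iff₀ hc]
    have h2 : (0:ℝ) ≤ ∫ ω, X N ω ∂μ := integral_nonneg (fun ω => hXnonneg N ω)
    have := hsum0 N
    linarith
  have hsumE : ∀ N, ∑ n ∈ Finset.range N, μ (B n)
      ≤ ENNReal.ofReal ((k : ℝ) / (1 - 2 * β)) := by
    intro N
    have heq : (∑ n ∈ Finset.range N, μ (B n))
        = ENNReal.ofReal (∑ n ∈ Finset.range N, (μ (B n)).toReal) := by
      rw [ENNReal.ofReal_sum_of_nonneg (fun _ _ => ENNReal.toReal_nonneg)]
      exact Finset.sum_congr rfl fun n _ =>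
        (ENNReal.ofReal_toReal (measure_ne_top μ _)).symm
    rw [heq]
    exact ENNReal.ofReal_le_ofReal (hsum' N)
  have htsum : ∑' n, μ (B n) ≤ ENNReal.ofReal ((k : ℝ) / (1 - 2 * β)) := by
    rw [ENNReal.tsum_eq_iSup_sum]
    refine iSup_le fun s => ?_
    obtain ⟨N, hs⟩ := s.exists_nat_subset_range
    exact le_trans (Finset.sum_le_sum_of_subset hs) (hsumE N)
  -- lintegral identity
  have hlin : ∫⁻ ω, (T ω : ℝ≥0∞) ∂μ = ∑' n, μ (B n) := by
    have hpt : ∀ ω, (T ω : ℝ≥0∞)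
        = ∑' n : ℕ, (B n).indicator (fun _ => (1:ℝ≥0∞)) ω := by
      intro ω
      rw [enat_coe_eq_tsum (T ω)]
      refine tsum_congr fun n => ?_
      by_cases h : ω ∈ B n
      · have h' : (n : ℕ∞) < T ω := h
        simp [Set.indicator_of_mem h, h']
      · have h' : ¬ (n : ℕ∞) < T ω := h
        simp [Set.indicator_of_notMem h, h']
    calc ∫⁻ ω, (T ω : ℝ≥0∞) ∂μ
        = ∫⁻ ω, ∑' n : ℕ, (B n).indicator (fun _ => (1:ℝ≥0∞)) ω ∂μ :=
          lintegral_congr hpt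
      _ = ∑' n : ℕ, ∫⁻ ω, (B n).indicator (fun _ => (1:ℝ≥0∞)) ω ∂μ :=
          lintegral_tsum fun n =>
            ((measurable_const.indicator (hBmeas n)).aemeasurable)
      _ = ∑' n : ℕ, μ (B n) := by
          exact tsum_congr fun n => lintegral_indicator_one (hBmeas n)
  -- finiteness
  have hTtop : μ {ω | T ω = ⊤} = 0 := by
    by_contra h
    have hsub : ∀ n : ℕ, {ω | T ω = ⊤} ⊆ B n := by
      intro n ω hω
      have : T ω = ⊤ := hω
      show (n : ℕ∞) < T ω
      rw [this]
      exact ENat.coe_lt_top n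
    have h1 : (∑' _n : ℕ, μ {ω | T ω = ⊤}) ≤ ∑' n, μ (B n) :=
      ENNReal.tsum_le_tsum fun n => measure_mono (hsub n)
    rw [ENNReal.tsum_const_eq_top_of_ne_zero h] at h1
    have h2 := h1.trans htsum
    exact (ENNReal.ofReal_ne_top (le_antisymm le_top h2)).elim
  constructor
  · rw [ae_iff]
    convert hTtop using 2
    ext ω
    simp [lt_top_iff_ne_top]
  · rw [hlin]
    exact htsum
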